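/- Let (α_j) be a sequence of pairwise distinct nonzero complex numbers with ∑_{j=1}^∞ 1/|α_j| < ∞. Then for any sequences of complex numbers (p_j) and (k_j), there exists an entire function g : ℂ → ℂ such that g(α_j) = p_j and g'(α_j) = k_j for every j ≥ 1. -/

import Mathlib

open Polynomial Finset Filter

/-- double root lemma -/
lemma eval_zero_of_sq_dvd {a : ℂ} {P : ℂ[X]} (h : (X - C a)^2 ∣ P) :
    P.eval a = 0 ∧ P.derivative.eval a = 0 := by
  obtain ⟨Q, rfl⟩ := h
  constructor
  · simp
  · simp [derivative_mul, derivative_pow]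

lemma norm_inv_mul_le {a z : ℂ} (hz : ‖z‖ ≤ ‖a‖ / 2) : ‖a⁻¹ * z‖ ≤ 1/2 := by
  rcases eq_or_ne a 0 with rfl | ha
  · simp
  · have h0 : (0:ℝ) < ‖a‖ := norm_pos_iff.2 ha
    rw [norm_mul, norm_inv, inv_mul_le_iff₀ h0]
    linarith

/-- Key: multiplying by a high power of `z/a` makes a polynomial (and its derivative)
small on the ball of radius `‖a‖/2`. -/
lemma exists_good_pow (P : ℂ[X]) (a : ℂ) {ε : ℝ} (hε : 0 < ε) :
    ∃ m : ℕ, ∀ z : ℂ, ‖z‖ ≤ ‖a‖ / 2 →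
      ‖(P * (C a⁻¹ * X) ^ m).eval z‖ ≤ ε ∧
      ‖(P * (C a⁻¹ * X) ^ m).derivative.eval z‖ ≤ ε := by
  obtain ⟨S, hS⟩ := (isCompact_closedBall (0:ℂ) (‖a‖/2)).exists_bound_of_continuousOn
    (f := fun z => P.eval z) (Continuous.continuousOn (by continuity))
  obtain ⟨S', hS'⟩ := (isCompact_closedBall (0:ℂ) (‖a‖/2)).exists_bound_of_continuousOn
    (f := fun z => P.derivative.eval z) (Continuous.continuousOn (by continuity))
  have hmem : ∀ z : ℂ, ‖z‖ ≤ ‖a‖/2 → z ∈ Metric.closedBall (0:ℂ) (‖a‖/2) := by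
    intro z hz; simpa [Metric.mem_closedBall] using hz
  have hS0 : 0 ≤ S := le_trans (norm_nonneg _) (hS 0 (hmem 0 (by rw [norm_zero]; positivity)))
  have hS'0 : 0 ≤ S' := le_trans (norm_nonneg _) (hS' 0 (hmem 0 (by rw [norm_zero]; positivity)))
  -- bound sequence
  set F : ℕ → ℝ := fun m => (S + S' + 2 * S * ‖a⁻¹‖ * m) * (1/2:ℝ)^m with hF
  have hFt : Tendsto F atTop (nhds 0) := by
    have h1 : Summable F := by
      have h2 : Summable (fun m : ℕ => (m:ℝ) * (1/2:ℝ)^m) := by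
        simpa using summable_pow_mul_geometric_of_norm_lt_one (R := ℝ) 1
          (r := (1/2:ℝ)) (by norm_num)
      have h3 : Summable (fun m : ℕ => (1/2:ℝ)^m) := summable_geometric_of_lt_one
        (by norm_num) (by norm_num)
      refine ((h3.mul_left (S + S')).add (h2.mul_left (2 * S * ‖a⁻¹‖))).congr fun m => ?_
      simp only [hF]; ring
    exact h1.tendsto_atTop_zero
  obtain ⟨m, hm⟩ := (hFt.eventually_lt_const hε).exists
  refine ⟨m, fun z hz => ?_⟩
  have hzS := hS z (hmem z hz)
  have hzS' := hS' z (hmem z hz)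
  have hμ : ‖a⁻¹ * z‖ ≤ 1/2 := norm_inv_mul_le hz
  have hμm : ∀ j : ℕ, ‖(a⁻¹ * z)^j‖ ≤ (1/2:ℝ)^j := by
    intro j
    rw [norm_pow]
    exact pow_le_pow_left₀ (norm_nonneg _) hμ j
  have hpow : ((1:ℝ)/2)^(m-1) ≤ 2 * (1/2)^m := by
    rcases Nat.eq_zero_or_pos m with rfl | hm1
    · norm_num
    · calc ((1:ℝ)/2)^(m-1) = 2 * ((1/2)^(m-1) * (1/2)) := by ring
      _ = 2 * (1/2)^m := by rw [← pow_succ, Nat.sub_add_cancel hm1]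
      _ ≤ 2 * (1/2)^m := le_rfl
  have hpm : (0:ℝ) ≤ (1/2:ℝ)^m := by positivity
  constructor
  · have : ‖(P * (C a⁻¹ * X) ^ m).eval z‖ = ‖P.eval z‖ * ‖(a⁻¹*z)^m‖ := by
      simp [norm_mul]
    rw [this]
    calc ‖P.eval z‖ * ‖(a⁻¹*z)^m‖ ≤ S * (1/2)^m := by
          exact mul_le_mul hzS (hμm m) (norm_nonneg _) hS0
    _ ≤ F m := by
          simp only [hF]
          have : (0:ℝ) ≤ S' + 2 * S * ‖a⁻¹‖ * m := by positivity
          nlinarith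
    _ ≤ ε := hm.le
  · have hd : (P * (C a⁻¹ * X) ^ m).derivative.eval z
        = P.derivative.eval z * (a⁻¹*z)^m + P.eval z * (m * (a⁻¹*z)^(m-1) * a⁻¹) := by
      simp only [derivative_mul, derivative_pow, eval_mul, eval_add, eval_pow, eval_mul,
        derivative_C, derivative_X, eval_C, eval_X, eval_natCast, mul_one, zero_mul, mul_zero,
        zero_add, add_zero]
    rw [hd]
    calc ‖P.derivative.eval z * (a⁻¹*z)^m + P.eval z * (m * (a⁻¹*z)^(m-1) * a⁻¹)‖
        ≤ ‖P.derivative.eval z‖ * ‖(a⁻¹*z)^m‖ + ‖P.eval z‖ * (m * ‖(a⁻¹*z)^(m-1)‖ * ‖a⁻¹‖) := by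
          refine le_trans (norm_add_le _ _) ?_
          simp [norm_mul]
    _ ≤ S' * (1/2)^m + S * (m * (2 * (1/2)^m) * ‖a⁻¹‖) := by
          gcongr
          · exact hμm m
          · exact le_trans (hμm _) hpow
    _ ≤ F m := by simp only [hF]; nlinarith [norm_nonneg (a⁻¹), hpm]
    _ ≤ ε := hm.le

lemma half_pow_pos (n : ℕ) : (0:ℝ) < (1/2)^n := by positivity

noncomputable def Bpoly (α : ℕ → ℂ) (n : ℕ) : ℂ[X] :=
  ∏ j ∈ Finset.range n, ((1 : ℂ[X]) - C (α j)⁻¹ * X)^2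

noncomputable def uu (α p : ℕ → ℂ) (n : ℕ) (Q : ℂ[X]) : ℂ :=
  (p n - Q.eval (α n)) / (Bpoly α n).eval (α n)

noncomputable def m1 (α p : ℕ → ℂ) (n : ℕ) (Q : ℂ[X]) : ℕ :=
  (exists_good_pow (C (uu α p n Q) * Bpoly α n) (α n) (half_pow_pos n)).choose

noncomputable def AA (α p : ℕ → ℂ) (n : ℕ) (Q : ℂ[X]) : ℂ[X] :=
  C (uu α p n Q) * Bpoly α n * (C (α n)⁻¹ * X) ^ (m1 α p n Q)

noncomputable def vv (α p k : ℕ → ℂ) (n : ℕ) (Q : ℂ[X]) : ℂ :=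
  (k n - Q.derivative.eval (α n) - (AA α p n Q).derivative.eval (α n)) / (Bpoly α n).eval (α n)

noncomputable def DD (α p k : ℕ → ℂ) (n : ℕ) (Q : ℂ[X]) : ℂ[X] :=
  C (vv α p k n Q) * (X - C (α n)) * Bpoly α n

noncomputable def m2 (α p k : ℕ → ℂ) (n : ℕ) (Q : ℂ[X]) : ℕ :=
  (exists_good_pow (DD α p k n Q) (α n) (half_pow_pos n)).choose

noncomputable def stepP (α p k : ℕ → ℂ) (n : ℕ) (Q : ℂ[X]) : ℂ[X] :=
  AA α p n Q + DD α p k n Q * (C (α n)⁻¹ * X) ^ (m2 α p k n Q)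

noncomputable def QQ (α p k : ℕ → ℂ) : ℕ → ℂ[X]
  | 0 => 0
  | n+1 => QQ α p k n + stepP α p k n (QQ α p k n)

noncomputable def TT (α p k : ℕ → ℂ) (n : ℕ) : ℂ[X] :=
  stepP α p k n (QQ α p k n)

lemma QQ_eq (α p k : ℕ → ℂ) (n : ℕ) : QQ α p k n = ∑ j ∈ Finset.range n, TT α p k j := by
  induction n with
  | zero => simp [QQ]
  | succ n ih => rw [Finset.sum_range_succ, ← ih]; rfl

section facts
variable {α p k : ℕ → ℂ}

lemma Bpoly_eval_ne (hinj : Function.Injective α) (hne : ∀ j, α j ≠ 0) (n : ℕ) : (Bpoly α n).eval (α n) ≠ 0 := by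
  rw [Bpoly, eval_prod]
  refine Finset.prod_ne_zero_iff.2 fun j hj => ?_
  simp only [eval_pow, eval_sub, eval_one, eval_mul, eval_C, eval_X]
  refine pow_ne_zero _ fun h => ?_
  have h1 : (α j)⁻¹ * α n = 1 := by linear_combination -h
  have h2 : α n = α j := by
    have h3 : α j * ((α j)⁻¹ * α n) = α j * 1 := by rw [h1]
    rwa [← mul_assoc, mul_inv_cancel₀ (hne j), one_mul, mul_one] at h3
  exact (Finset.mem_range.1 hj).ne (hinj h2).symm

lemma sq_dvd_Bpoly (hne : ∀ j, α j ≠ 0) {i n : ℕ} (h : i < n) : (X - C (α i))^2 ∣ Bpoly α n := by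
  have h1 : (X - C (α i)) ∣ ((1 : ℂ[X]) - C (α i)⁻¹ * X) := by
    refine ⟨C (-(α i)⁻¹), ?_⟩
    have hc : (α i) * (α i)⁻¹ = 1 := mul_inv_cancel₀ (hne i)
    calc (1 : ℂ[X]) - C (α i)⁻¹ * X
        = C ((α i) * (α i)⁻¹) - C (α i)⁻¹ * X := by rw [hc, C_1]
      _ = (X - C (α i)) * C (-(α i)⁻¹) := by rw [C_mul]; ring_nf; rw [C_neg]; ring
  exact dvd_trans (pow_dvd_pow_of_dvd h1 2)
    (Finset.dvd_prod_of_mem _ (Finset.mem_range.2 h))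

lemma sq_dvd_stepP (hne : ∀ j, α j ≠ 0) {i n : ℕ} (h : i < n) (Q : ℂ[X]) :
    (X - C (α i))^2 ∣ stepP α p k n Q := by
  have hB := sq_dvd_Bpoly hne h
  refine dvd_add ?_ ?_
  · exact Dvd.dvd.mul_right (Dvd.dvd.mul_left hB _) _
  · exact Dvd.dvd.mul_right (Dvd.dvd.mul_left hB _) _

lemma stepP_eval (hinj : Function.Injective α) (hne : ∀ j, α j ≠ 0) (n : ℕ) (Q : ℂ[X]) :
    (stepP α p k n Q).eval (α n) = p n - Q.eval (α n) := by
  have hB := Bpoly_eval_ne hinj hne (α := α) n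
  have hμ : ((α n)⁻¹ * α n) = 1 := inv_mul_cancel₀ (hne n)
  simp only [stepP, AA, DD, eval_add, eval_mul, eval_pow, eval_C, eval_X, eval_sub, hμ, one_pow,
    mul_one, sub_self, mul_zero, zero_mul, add_zero, uu]
  field_simp [hB]

lemma stepP_deriv_eval (hinj : Function.Injective α) (hne : ∀ j, α j ≠ 0) (n : ℕ) (Q : ℂ[X]) :
    (stepP α p k n Q).derivative.eval (α n) = k n - Q.derivative.eval (α n) := by
  have hB := Bpoly_eval_ne hinj hne (α := α) n
  have hμ : ((α n)⁻¹ * α n) = 1 := inv_mul_cancel₀ (hne n)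
  have hD : (DD α p k n Q).eval (α n) = 0 := by
    simp [DD]
  have hD' : (DD α p k n Q).derivative.eval (α n) = vv α p k n Q * (Bpoly α n).eval (α n) := by
    simp only [DD, derivative_mul, derivative_C, zero_mul, derivative_sub, derivative_X,
      derivative_C, sub_zero, mul_one, eval_add, eval_mul, eval_sub, eval_C, eval_X,
      sub_self, mul_zero, zero_mul, zero_add, add_zero]
  simp only [stepP, derivative_add, derivative_mul, eval_add, eval_mul, derivative_pow, eval_pow,
    eval_C, eval_X, hμ, one_pow, mul_one, hD, hD', zero_mul, mul_zero, add_zero]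
  rw [vv]
  field_simp [hB]
  ring

lemma AA_bound (α p : ℕ → ℂ) (n : ℕ) (Q : ℂ[X]) :
    ∀ z : ℂ, ‖z‖ ≤ ‖α n‖ / 2 →
      ‖(AA α p n Q).eval z‖ ≤ (1/2:ℝ)^n ∧ ‖(AA α p n Q).derivative.eval z‖ ≤ (1/2:ℝ)^n := by
  unfold AA m1
  exact (exists_good_pow _ _ (half_pow_pos n)).choose_spec

lemma DD_bound (α p k : ℕ → ℂ) (n : ℕ) (Q : ℂ[X]) :
    ∀ z : ℂ, ‖z‖ ≤ ‖α n‖ / 2 →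
      ‖(DD α p k n Q * (C (α n)⁻¹ * X) ^ m2 α p k n Q).eval z‖ ≤ (1/2:ℝ)^n ∧
      ‖(DD α p k n Q * (C (α n)⁻¹ * X) ^ m2 α p k n Q).derivative.eval z‖ ≤ (1/2:ℝ)^n := by
  unfold m2
  exact (exists_good_pow _ _ (half_pow_pos n)).choose_spec

lemma stepP_bound (n : ℕ) (Q : ℂ[X]) :
    ∀ z : ℂ, ‖z‖ ≤ ‖α n‖ / 2 →
      ‖(stepP α p k n Q).eval z‖ ≤ 2 * (1/2)^n ∧
      ‖(stepP α p k n Q).derivative.eval z‖ ≤ 2 * (1/2)^n := by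
  intro z hz
  have h1 := AA_bound α p n Q z hz
  have h2 := DD_bound α p k n Q z hz
  constructor
  · rw [stepP, eval_add]
    refine le_trans (norm_add_le _ _) ?_
    linarith [h1.1, h2.1]
  · rw [stepP, derivative_add, eval_add]
    refine le_trans (norm_add_le _ _) ?_
    linarith [h1.2, h2.2]

end facts


section main
variable {α p k : ℕ → ℂ}

lemma TT_bound (α p k : ℕ → ℂ) (n : ℕ) :
    ∀ z : ℂ, ‖z‖ ≤ ‖α n‖ / 2 →
      ‖(TT α p k n).eval z‖ ≤ 2 * (1/2)^n ∧
      ‖(TT α p k n).derivative.eval z‖ ≤ 2 * (1/2)^n := by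
  unfold TT
  exact stepP_bound n (QQ α p k n)

lemma TT_zero (hne : ∀ j, α j ≠ 0) {i n : ℕ} (h : i < n) :
    (TT α p k n).eval (α i) = 0 ∧ (TT α p k n).derivative.eval (α i) = 0 :=
  eval_zero_of_sq_dvd (sq_dvd_stepP hne h _)

lemma TT_eval (hinj : Function.Injective α) (hne : ∀ j, α j ≠ 0) (n : ℕ) :
    (TT α p k n).eval (α n) = p n - (QQ α p k n).eval (α n) := by
  unfold TT
  exact stepP_eval hinj hne n _

lemma TT_deriv_eval (hinj : Function.Injective α) (hne : ∀ j, α j ≠ 0) (n : ℕ) :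
    (TT α p k n).derivative.eval (α n) = k n - (QQ α p k n).derivative.eval (α n) := by
  unfold TT
  exact stepP_deriv_eval hinj hne n _

end main

/-- If `(α j)` are pairwise distinct nonzero complex numbers with
`∑ 1/|α j| < ∞`, then for any complex sequences `(p j)` and `(k j)` there is an entire
function `g` with `g (α j) = p j` and `g' (α j) = k j` for every `j`. -/
theorem holomorphic_interpolation (α : ℕ → ℂ) (hinj : Function.Injective α)
    (hne : ∀ j, α j ≠ 0) (hsum : Summable fun j => 1 / ‖α j‖) (p k : ℕ → ℂ) :
    ∃ g : ℂ → ℂ, Differentiable ℂ g ∧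
      ∀ j, g (α j) = p j ∧ deriv g (α j) = k j := by
  set T : ℕ → ℂ[X] := TT α p k with hT
  set g : ℂ → ℂ := fun z => ∑' n, (T n).eval z with hg
  have hgeo : Summable (fun n : ℕ => 2 * (1/2:ℝ)^n) :=
    (summable_geometric_of_lt_one (by norm_num) (by norm_num)).mul_left 2
  -- the series converges (absolutely) at 0
  have hz0 : ∀ n : ℕ, ‖(0:ℂ)‖ ≤ ‖α n‖ / 2 := fun n => by rw [norm_zero]; positivity
  have hg0 : Summable (fun n => (T n).eval 0) :=
    Summable.of_norm_bounded hgeo fun n => (TT_bound α p k n 0 (hz0 n)).1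
  -- key differentiability fact
  have key : ∀ y : ℂ, HasDerivAt g (∑' n, (T n).derivative.eval y) y := by
    intro y
    set R : ℝ := ‖y‖ + 1 with hRdef
    have hR : 0 < R := by positivity
    -- eventually ‖α n‖ is large
    have hα : ∀ᶠ n in Filter.atTop, 2 * R ≤ ‖α n‖ := by
      have h0 : Filter.Tendsto (fun j => 1 / ‖α j‖) Filter.atTop (nhds 0) :=
        hsum.tendsto_atTop_zero
      have hlt : ∀ᶠ n in Filter.atTop, 1 / ‖α n‖ < 1 / (2 * R) :=
        h0.eventually_lt_const (by positivity)
      filter_upwards [hlt] with n hn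
      have hpos : 0 < ‖α n‖ := norm_pos_iff.2 (hne n)
      have := lt_of_one_div_lt_one_div hpos hn
      linarith
    obtain ⟨N, hN⟩ := Filter.eventually_atTop.1 hα
    -- uniform bound on the derivatives on the ball of radius R
    set u : ℕ → ℝ := fun n =>
      sSup ((fun z => ‖(T n).derivative.eval z‖) '' Metric.closedBall (0:ℂ) R) with hu_def
    have hbdd : ∀ n, BddAbove ((fun z => ‖(T n).derivative.eval z‖) '' Metric.closedBall (0:ℂ) R) :=
      fun n => ((isCompact_closedBall (0:ℂ) R).image_of_continuousOn
        (Continuous.continuousOn (by continuity))).bddAbove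
    have hub : ∀ n, ∀ z ∈ Metric.closedBall (0:ℂ) R, ‖(T n).derivative.eval z‖ ≤ u n :=
      fun n z hz => le_csSup (hbdd n) ⟨z, hz, rfl⟩
    have hu0 : ∀ n, 0 ≤ u n := fun n =>
      le_trans (norm_nonneg _) (hub n 0 (by simp [hR.le]))
    have hule : ∀ n, N ≤ n → u n ≤ 2 * (1/2)^n := by
      intro n hn
      apply csSup_le (Set.Nonempty.image _ ⟨0, by simp [hR.le]⟩)
      rintro x ⟨z, hz, rfl⟩
      refine (TT_bound α p k n z ?_).2
      have hz' : ‖z‖ ≤ R := by simpa [Metric.mem_closedBall] using hz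
      have := hN n hn
      linarith
    have hu : Summable u := by
      rw [← summable_nat_add_iff N]
      refine Summable.of_nonneg_of_le (fun n => hu0 _) (fun n => hule (n+N) (by omega)) ?_
      have hs2 : Summable (fun n : ℕ => (2 * (1/2:ℝ)^N) * (1/2)^n) :=
        (summable_geometric_of_lt_one (by norm_num) (by norm_num)).mul_left _
      refine hs2.congr fun n => ?_
      rw [pow_add]
      ring
    have hball : y ∈ Metric.ball (0:ℂ) R := by
      simp only [Metric.mem_ball, dist_zero_right, hRdef]
      linarith
    have h0ball : (0:ℂ) ∈ Metric.ball (0:ℂ) R := by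
      simpa [Metric.mem_ball] using hR
    exact hasDerivAt_tsum_of_isPreconnected hu (Metric.isOpen_ball)
      ((convex_ball (0:ℂ) R).isPreconnected)
      (g := fun n z => (T n).eval z) (g' := fun n z => (T n).derivative.eval z)
      (fun n z _ => Polynomial.hasDerivAt _ _)
      (fun n z hz => hub n z (Metric.ball_subset_closedBall hz))
      h0ball hg0 hball
  refine ⟨g, fun y => (key y).differentiableAt, fun j => ⟨?_, ?_⟩⟩
  · -- value interpolation
    show (∑' n, (T n).eval (α j)) = p j
    have hzero : ∀ n ∉ Finset.range (j+1), (T n).eval (α j) = 0 := by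
      intro n hn
      exact (TT_zero hne (by simp only [Finset.mem_range] at hn; omega)).1
    rw [tsum_eq_sum hzero, Finset.sum_range_succ]
    have hQ : ∑ n ∈ Finset.range j, (T n).eval (α j) = (QQ α p k j).eval (α j) := by
      rw [QQ_eq, eval_finset_sum]
    rw [hQ, hT, TT_eval hinj hne j]
    ring
  · -- derivative interpolation
    rw [(key (α j)).deriv]
    have hzero : ∀ n ∉ Finset.range (j+1), (T n).derivative.eval (α j) = 0 := by
      intro n hn
      exact (TT_zero hne (by simp only [Finset.mem_range] at hn; omega)).2
    rw [tsum_eq_sum hzero, Finset.sum_range_succ]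
    have hQ : ∑ n ∈ Finset.range j, (T n).derivative.eval (α j)
        = (QQ α p k j).derivative.eval (α j) := by
      rw [QQ_eq, derivative_sum, eval_finset_sum]
    rw [hQ, hT, TT_deriv_eval hinj hne j]
    ring
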